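/- Let p be a polynomial of degree at least 2 and let α be a root of p of multiplicity k. Then the Chebyshev iteration map C_p(z) = z - (1 + L_p(z)/2)·p(z)/p'(z), where L_p(z) = p(z)p''(z)/p'(z)², satisfies C_p(α) = α and C_p'(α) = (k-1)(2k-1)/(2k²). In particular, if k = 1 then C_p'(α) = 0. -/

import Mathlib

open Polynomial

noncomputable def Cheb (p : ℂ[X]) (z : ℂ) : ℂ :=
  z - (1 + (p.eval z * (derivative (derivative p)).eval z) /
        (2 * ((derivative p).eval z) ^ 2)) * (p.eval z / (derivative p).eval z)

theorem chebyshev_fixed_point_multiplier_at_root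
    (p g : ℂ[X]) (k : ℕ) (α : ℂ) (hk : 1 ≤ k)
    (hdeg : 2 ≤ p.natDegree)
    (hp : p = (X - C α) ^ k * g) (hg : g.eval α ≠ 0) :
    Cheb p α = α ∧
    deriv (Cheb p) α = ((k : ℂ) - 1) * (2 * (k : ℂ) - 1) / (2 * (k : ℂ) ^ 2) ∧
    (k = 1 → deriv (Cheb p) α = 0) := by
  obtain ⟨n, rfl⟩ : ∃ n, k = n + 1 := ⟨k - 1, (Nat.succ_pred_eq_of_pos hk).symm⟩
  have hn1 : ((n : ℂ) + 1) ≠ 0 := by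
    have : ((n : ℂ) + 1) = ((n + 1 : ℕ) : ℂ) := by push_cast; ring
    rw [this]
    exact Nat.cast_ne_zero.mpr n.succ_ne_zero
  obtain ⟨A, hAdef⟩ : ∃ A : ℂ[X], A = C ((n : ℂ) + 1) * g + (X - C α) * derivative g :=
    ⟨_, rfl⟩
  have hAα : A.eval α = ((n : ℂ) + 1) * g.eval α := by simp [hAdef]
  have hAne : A.eval α ≠ 0 := by rw [hAα]; exact mul_ne_zero hn1 hg
  have hA : derivative p = (X - C α) ^ n * A := by
    rw [hp, derivative_mul, derivative_pow, derivative_X_sub_C, hAdef]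
    push_cast
    ring
  have hA2 : derivative (derivative p)
      = C (n : ℂ) * (X - C α) ^ (n - 1) * A + (X - C α) ^ n * derivative A := by
    rw [hA, derivative_mul, derivative_pow, derivative_X_sub_C]
    ring
  have hp0 : p.eval α = 0 := by
    simp [hp]
  have hfix : Cheb p α = α := by
    simp [Cheb, hp0]
  obtain ⟨Q, hQdef⟩ : ∃ Q : ℂ[X],
      Q = (C 2 * A ^ 2 + g * (C (n : ℂ) * A + (X - C α) * derivative A))
        * ((X - C α) * g) := ⟨_, rfl⟩
  obtain ⟨R, hRdef⟩ : ∃ R : ℂ[X], R = C 2 * A ^ 3 := ⟨_, rfl⟩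
  have hRα : R.eval α = 2 * (A.eval α) ^ 3 := by simp [hRdef]
  have hRne : R.eval α ≠ 0 := by
    rw [hRα]; exact mul_ne_zero two_ne_zero (pow_ne_zero _ hAne)
  have hQα : Q.eval α = 0 := by simp [hQdef]
  have heq : ∀ z, A.eval z ≠ 0 → Cheb p z = z - Q.eval z / R.eval z := by
    intro z hz
    by_cases hzα : z = α
    · subst hzα
      rw [hfix, hQα, zero_div, sub_zero]
    · have hw : z - α ≠ 0 := sub_ne_zero.mpr hzα
      have hwn : (z - α) ^ n ≠ 0 := pow_ne_zero _ hw
      have e0 : p.eval z = (z - α) ^ n * ((z - α) * g.eval z) := by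
        rw [hp]; simp [pow_succ]; ring
      have e1 : (derivative p).eval z = (z - α) ^ n * A.eval z := by
        rw [hA]; simp
      have e2 : (z - α) * (derivative (derivative p)).eval z
          = (z - α) ^ n * ((n : ℂ) * A.eval z + (z - α) * (derivative A).eval z) := by
        rw [hA2]
        simp only [eval_add, eval_mul, eval_pow, eval_C, eval_sub, eval_X]
        cases n with
        | zero => simp
        | succ m =>
          have h : (z - α) ^ (m + 1) = (z - α) * (z - α) ^ (m + 1 - 1) := by
            rw [Nat.add_sub_cancel, pow_succ]; ring
          rw [h]; ring
      have e3 : p.eval z * (derivative (derivative p)).eval z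
          = (z - α) ^ n * ((z - α) ^ n *
              (g.eval z * ((n : ℂ) * A.eval z + (z - α) * (derivative A).eval z))) := by
        rw [e0]
        linear_combination ((z - α) ^ n * g.eval z) * e2
      simp only [Cheb]
      rw [e3, e0, e1]
      simp only [hQdef, hRdef, eval_mul, eval_add, eval_pow, eval_C, eval_sub, eval_X]
      field_simp
  have hev : Cheb p =ᶠ[nhds α] fun z => z - Q.eval z / R.eval z := by
    have hc : ContinuousAt (fun z => A.eval z) α := A.continuousAt
    exact (hc.eventually_ne hAne).mono heq
  have hQ' : HasDerivAt (fun z => Q.eval z) ((derivative Q).eval α) α := Q.hasDerivAt α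
  have hR' : HasDerivAt (fun z => R.eval z) ((derivative R).eval α) α := R.hasDerivAt α
  have hN : HasDerivAt (fun z => z - Q.eval z / R.eval z)
      (1 - ((derivative Q).eval α * R.eval α - Q.eval α * (derivative R).eval α)
        / (R.eval α) ^ 2) α := (hasDerivAt_id α).sub (hQ'.div hR' hRne)
  have hC : HasDerivAt (Cheb p)
      (1 - ((derivative Q).eval α * R.eval α - Q.eval α * (derivative R).eval α)
        / (R.eval α) ^ 2) α := hN.congr_of_eventuallyEq hev
  have hQ'α : (derivative Q).eval α
      = (2 * (A.eval α) ^ 2 + g.eval α * ((n : ℂ) * A.eval α)) * g.eval α := by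
    rw [hQdef]
    simp [derivative_mul, derivative_add, derivative_pow]
  have hder : deriv (Cheb p) α
      = ((↑(n + 1) : ℂ) - 1) * (2 * (↑(n + 1) : ℂ) - 1) / (2 * (↑(n + 1) : ℂ) ^ 2) := by
    rw [hC.deriv, hQ'α, hQα, hRα, hAα]
    push_cast
    field_simp
    ring
  refine ⟨hfix, hder, ?_⟩
  intro hk1
  have hn0 : n = 0 := by omega
  subst hn0
  rw [hder]
  norm_num
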